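/- Let f : S^{d-1} → R be continuously differentiable, extended to R^d \ {0} by F(z) = f(z/‖z‖), and set D_{i,j}F(x) = x_j∂_i F(x) - x_i∂_j F(x). Then ∫_{S^{d-1}} |∇₀ f(x)|² dσ(x) = Σ_{1 ≤ i < j ≤ d} ∫_{S^{d-1}} |D_{i,j}F(x)|² dσ(x), where ∇₀f(x) = ∇F(x) for x ∈ S^{d-1} is the tangential gradient. -/

import Mathlib

open MeasureTheory Metric
open scoped InnerProductSpace BigOperators

theorem lagrange' (d : ℕ) (a b : Fin d → ℝ) :
    (∑ i : Fin d, ∑ j : Fin d, if i < j then (a i * b j - a j * b i)^2 else 0)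
      = (∑ i, a i ^ 2) * (∑ i, b i ^ 2) - (∑ i, a i * b i)^2 := by
  have h2 : (∑ i : Fin d, ∑ j : Fin d, (a i * b j - a j * b i)^2)
      = 2 * ((∑ i, a i ^ 2) * (∑ i, b i ^ 2) - (∑ i, a i * b i)^2) := by
    have : ∀ i j, (a i * b j - a j * b i)^2
        = a i ^2 * b j ^2 + a j ^2 * b i ^2 - 2 * (a i * b i) * (a j * b j) := by
      intros; ring
    simp only [this, Finset.sum_add_distrib, Finset.sum_sub_distrib,
      ← Finset.mul_sum, ← Finset.sum_mul]
    ring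
  have hswap : (∑ i : Fin d, ∑ j : Fin d, if j < i then (a i * b j - a j * b i)^2 else 0)
      = ∑ i : Fin d, ∑ j : Fin d, if i < j then (a i * b j - a j * b i)^2 else 0 := by
    rw [Finset.sum_comm]
    refine Finset.sum_congr rfl fun i _ => Finset.sum_congr rfl fun j _ => ?_
    congr 1; ring
  have hkey : (∑ i : Fin d, ∑ j : Fin d, (a i * b j - a j * b i)^2)
      = (∑ i : Fin d, ∑ j : Fin d, if i < j then (a i * b j - a j * b i)^2 else 0)
        + ∑ i : Fin d, ∑ j : Fin d, if j < i then (a i * b j - a j * b i)^2 else 0 := by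
    rw [← Finset.sum_add_distrib]
    refine Finset.sum_congr rfl fun i _ => ?_
    rw [← Finset.sum_add_distrib]
    refine Finset.sum_congr rfl fun j _ => ?_
    rcases lt_trichotomy i j with h | h | h
    · simp [h, not_lt_of_gt h]
    · subst h; simp
    · simp [h, not_lt_of_gt h]
  rw [hkey, hswap] at h2
  linarith

theorem stmt12 (d : ℕ) (F : EuclideanSpace ℝ (Fin d) → ℝ)
    (hF : ContDiffOn ℝ 1 F {(0 : EuclideanSpace ℝ (Fin d))}ᶜ)
    (hhom : ∀ z : EuclideanSpace ℝ (Fin d), z ≠ 0 → F z = F (‖z‖⁻¹ • z))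
    (D : Fin d → Fin d → EuclideanSpace ℝ (Fin d) → ℝ)
    (hD : ∀ i j x, D i j x =
      x j * fderiv ℝ F x (EuclideanSpace.single i 1) -
        x i * fderiv ℝ F x (EuclideanSpace.single j 1)) :
    ∫ x : Metric.sphere (0 : EuclideanSpace ℝ (Fin d)) 1,
        ‖gradient F (x : EuclideanSpace ℝ (Fin d))‖ ^ 2
        ∂(volume : Measure (EuclideanSpace ℝ (Fin d))).toSphere
      = ∑ i : Fin d, ∑ j : Fin d, if i < j then
          ∫ x : Metric.sphere (0 : EuclideanSpace ℝ (Fin d)) 1,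
            (D i j x) ^ 2 ∂(volume : Measure (EuclideanSpace ℝ (Fin d))).toSphere
        else 0 := by
  have hnorm : ∀ x : Metric.sphere (0 : EuclideanSpace ℝ (Fin d)) 1,
      ‖(x : EuclideanSpace ℝ (Fin d))‖ = 1 := fun x => by
    have := x.2
    rwa [mem_sphere_zero_iff_norm] at this
  -- Euler identity
  have euler : ∀ x : EuclideanSpace ℝ (Fin d), ‖x‖ = 1 → fderiv ℝ F x x = 0 := by
    intro x hx
    have hx0 : x ≠ 0 := by intro h; rw [h] at hx; simp at hx
    have hd : DifferentiableAt ℝ F x :=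
      (hF.contDiffAt (isOpen_compl_singleton.mem_nhds hx0)).differentiableAt one_ne_zero
    have hsm : HasDerivAt (fun t : ℝ => t • x) x 1 := by
      simpa using (hasDerivAt_id (1:ℝ)).smul_const x
    have hdF : HasFDerivAt F (fderiv ℝ F x) ((1:ℝ) • x) := by
      rw [one_smul]; exact hd.hasFDerivAt
    have h1 : HasDerivAt (fun t : ℝ => F (t • x)) (fderiv ℝ F x x) 1 := by
      exact hdF.comp_hasDerivAt 1 hsm
    have h2 : (fun t : ℝ => F (t • x)) =ᶠ[nhds 1] fun _ => F x := by
      filter_upwards [isOpen_Ioi.mem_nhds (show (1:ℝ) ∈ Set.Ioi 0 by norm_num)] with t ht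
      have ht0 : (0:ℝ) < t := ht
      have htx : t • x ≠ 0 := by simp [smul_eq_zero, hx0, ne_of_gt ht0]
      rw [hhom _ htx, norm_smul, hx, Real.norm_eq_abs, abs_of_pos ht0]
      simp [smul_smul, inv_mul_cancel₀ (ne_of_gt ht0)]
    exact ((hasDerivAt_const (1:ℝ) (F x)).unique (h1.congr_of_eventuallyEq h2.symm)).symm
  -- gradient facts
  have hgrad : ∀ (x v : EuclideanSpace ℝ (Fin d)), ⟪gradient F x, v⟫_ℝ = fderiv ℝ F x v := by
    intro x v
    simp [gradient, InnerProductSpace.toDual_symm_apply]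
  have hcoord : ∀ (x : EuclideanSpace ℝ (Fin d)) (i : Fin d),
      gradient F x i = fderiv ℝ F x (EuclideanSpace.single i 1) := by
    intro x i
    rw [← hgrad x (EuclideanSpace.single i 1)]
    exact (by rw [EuclideanSpace.inner_single_right]; simp : ⟪gradient F x, EuclideanSpace.single i 1⟫_ℝ = gradient F x i).symm
  -- pointwise identity
  have hpt : ∀ x : Metric.sphere (0 : EuclideanSpace ℝ (Fin d)) 1,
      ‖gradient F (x : EuclideanSpace ℝ (Fin d))‖ ^ 2 = ∑ i : Fin d, ∑ j : Fin d,
        if i < j then (D i j (x : EuclideanSpace ℝ (Fin d)))^2 else 0 := by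
    intro x
    have h1 : (∑ i : Fin d, ∑ j : Fin d,
          if i < j then (D i j (x : EuclideanSpace ℝ (Fin d)))^2 else 0)
        = ∑ i : Fin d, ∑ j : Fin d,
          if i < j then ((x : EuclideanSpace ℝ (Fin d)) i * gradient F x j
            - (x : EuclideanSpace ℝ (Fin d)) j * gradient F x i)^2 else 0 := by
      refine Finset.sum_congr rfl fun i _ => Finset.sum_congr rfl fun j _ => ?_
      by_cases h : i < j
      · simp only [h, if_true, hD, hcoord]
        ring
      · simp [h]
    rw [h1, lagrange' d (fun i => (x : EuclideanSpace ℝ (Fin d)) i) (fun i => gradient F x i)]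
    have ha : (∑ i, ((x : EuclideanSpace ℝ (Fin d)) i)^2) = 1 := by
      have h := real_inner_self_eq_norm_sq (x : EuclideanSpace ℝ (Fin d))
      rw [hnorm x] at h
      simp only [PiLp.inner_apply, RCLike.inner_apply, conj_trivial] at h
      simpa [sq] using h
    have hb : (∑ i, (gradient F (x : EuclideanSpace ℝ (Fin d)) i)^2)
        = ‖gradient F (x : EuclideanSpace ℝ (Fin d))‖^2 := by
      have h := real_inner_self_eq_norm_sq (gradient F (x : EuclideanSpace ℝ (Fin d)))
      simp only [PiLp.inner_apply, RCLike.inner_apply, conj_trivial] at h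
      simpa [sq] using h
    have hab : (∑ i, (x : EuclideanSpace ℝ (Fin d)) i
        * gradient F (x : EuclideanSpace ℝ (Fin d)) i) = 0 := by
      have h := hgrad (x : EuclideanSpace ℝ (Fin d)) (x : EuclideanSpace ℝ (Fin d))
      rw [euler _ (hnorm x)] at h
      simp only [PiLp.inner_apply, RCLike.inner_apply, conj_trivial] at h
      calc (∑ i, (x : EuclideanSpace ℝ (Fin d)) i * gradient F x i)
          = ∑ i, gradient F (x : EuclideanSpace ℝ (Fin d)) i * (x : EuclideanSpace ℝ (Fin d)) i := by
            exact Finset.sum_congr rfl fun i _ => mul_comm _ _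
        _ = 0 := by simpa only [mul_comm] using h
    rw [ha, hb, hab]
    ring
  -- integrability
  have hcontf : ContinuousOn (fderiv ℝ F) {(0 : EuclideanSpace ℝ (Fin d))}ᶜ :=
    hF.continuousOn_fderiv_of_isOpen isOpen_compl_singleton le_rfl
  have hmem : ∀ x : Metric.sphere (0 : EuclideanSpace ℝ (Fin d)) 1,
      (x : EuclideanSpace ℝ (Fin d)) ∈ ({(0 : EuclideanSpace ℝ (Fin d))}ᶜ : Set _) := by
    intro x
    simp only [Set.mem_compl_iff, Set.mem_singleton_iff]
    intro h
    have := hnorm x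
    rw [h] at this; simp at this
  have hc1 : Continuous (fun x : Metric.sphere (0 : EuclideanSpace ℝ (Fin d)) 1 =>
      fderiv ℝ F (x : EuclideanSpace ℝ (Fin d))) :=
    hcontf.comp_continuous continuous_subtype_val hmem
  have hcD : ∀ i j : Fin d, Continuous (fun x : Metric.sphere (0 : EuclideanSpace ℝ (Fin d)) 1 =>
      D i j (x : EuclideanSpace ℝ (Fin d))) := by
    intro i j
    simp only [hD]
    exact (((EuclideanSpace.proj j).continuous.comp continuous_subtype_val).mul
        (hc1.clm_apply continuous_const)).sub
      (((EuclideanSpace.proj i).continuous.comp continuous_subtype_val).mul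
        (hc1.clm_apply continuous_const))
  have hInt : ∀ i j : Fin d,
      Integrable (fun x : Metric.sphere (0 : EuclideanSpace ℝ (Fin d)) 1 =>
        if i < j then (D i j (x : EuclideanSpace ℝ (Fin d)))^2 else 0)
        (volume : Measure (EuclideanSpace ℝ (Fin d))).toSphere := by
    intro i j
    by_cases h : i < j
    · simp only [if_pos h]
      exact ((hcD i j).pow 2).integrable_of_hasCompactSupport
        (HasCompactSupport.of_compactSpace _)
    · simp only [if_neg h]
      exact integrable_zero _ _ _
  calc ∫ x : Metric.sphere (0 : EuclideanSpace ℝ (Fin d)) 1,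
        ‖gradient F (x : EuclideanSpace ℝ (Fin d))‖ ^ 2
        ∂(volume : Measure (EuclideanSpace ℝ (Fin d))).toSphere
      = ∫ x : Metric.sphere (0 : EuclideanSpace ℝ (Fin d)) 1, ∑ i : Fin d, ∑ j : Fin d,
          (if i < j then (D i j (x : EuclideanSpace ℝ (Fin d)))^2 else 0)
          ∂(volume : Measure (EuclideanSpace ℝ (Fin d))).toSphere :=
        integral_congr_ae (Filter.Eventually.of_forall fun x => hpt x)
    _ = ∑ i : Fin d, ∫ x : Metric.sphere (0 : EuclideanSpace ℝ (Fin d)) 1, ∑ j : Fin d,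
          (if i < j then (D i j (x : EuclideanSpace ℝ (Fin d)))^2 else 0)
          ∂(volume : Measure (EuclideanSpace ℝ (Fin d))).toSphere :=
        integral_finset_sum _ fun i _ => integrable_finset_sum _ fun j _ => hInt i j
    _ = ∑ i : Fin d, ∑ j : Fin d, ∫ x : Metric.sphere (0 : EuclideanSpace ℝ (Fin d)) 1,
          (if i < j then (D i j (x : EuclideanSpace ℝ (Fin d)))^2 else 0)
          ∂(volume : Measure (EuclideanSpace ℝ (Fin d))).toSphere :=
        Finset.sum_congr rfl fun i _ => integral_finset_sum _ fun j _ => hInt i j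
    _ = ∑ i : Fin d, ∑ j : Fin d, if i < j then
          ∫ x : Metric.sphere (0 : EuclideanSpace ℝ (Fin d)) 1,
            (D i j x) ^ 2 ∂(volume : Measure (EuclideanSpace ℝ (Fin d))).toSphere
        else 0 := by
        refine Finset.sum_congr rfl fun i _ => Finset.sum_congr rfl fun j _ => ?_
        by_cases h : i < j
        · simp [h]
        · simp [h]
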